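/- Assume κ is UD-self-dual and 𝗊 : P → ℝ_{>0} is such that 𝗊² satisfies the Kerov condition with a parameter t > 0; fix ξ ∈ (0,1). Then for all μ, λ ∈ 𝔾: (i) Σ_{ϰ : ϰ ↗ λ} κ(ϰ,λ) 𝗊(λ∖ϰ) √(M_ξ(ϰ)) P*_μ(ϰ) = ξ^{−1/2} (|λ| − |μ|) √(M_ξ(λ)) P*_μ(λ); and (ii) Σ_{ν : ν ↘ λ} κ(λ,ν) 𝗊(ν∖λ) √(M_ξ(ν)) P*_μ(ν) = ξ^{1/2} (|λ| + |μ| + t) √(M_ξ(λ)) P*_μ(λ) + ξ^{1/2} Σ_{ρ : ρ ↗ μ} κ(ρ,μ) 𝗊(μ∖ρ)² √(M_ξ(λ)) P*_ρ(λ). -/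

import Mathlib

open scoped BigOperators Classical

namespace IdealGraph

variable {P : Type*} [PartialOrder P]

/-- A finite order ideal of the poset `P`, encoded as a down-closed `Finset`. -/
def IsIdealF (s : Finset P) : Prop := ∀ ⦃x⦄, x ∈ s → ∀ ⦃y⦄, y ≤ x → y ∈ s

/-- The vertex set of the branching graph of ideals `𝔾 = J(P)`. -/
abbrev G (P : Type*) [PartialOrder P] := {s : Finset P // IsIdealF s}

/-- The `n`-th level `𝔾_n` of the branching graph. -/
abbrev Lvl (P : Type*) [PartialOrder P] (n : ℕ) := {s : Finset P // IsIdealF s ∧ s.card = n}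

/-- `CoversF μ l` : `μ ↗ l` is an edge of the branching graph of ideals. -/
def CoversF (μ l : Finset P) : Prop :=
  IsIdealF μ ∧ IsIdealF l ∧ μ ⊆ l ∧ l.card = μ.card + 1

/-- All levels `𝔾_n` of the graph are finite. -/
def LevelsFinite (P : Type*) [PartialOrder P] : Prop :=
  ∀ n : ℕ, {s : Finset P | IsIdealF s ∧ s.card = n}.Finite

/-- An edge multiplicity function is (strictly) positive on all edges. -/
def EdgePositive (κ : Finset P → Finset P → ℝ) : Prop :=
  ∀ μ l, CoversF μ l → 0 < κ μ l

/-- UD-self-duality of a multiplicity function: for every quadrangle `μ ρ ν λ`. -/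
def UDSelfDual (κ : Finset P → Finset P → ℝ) : Prop :=
  ∀ μ ρ l ν : Finset P, CoversF μ ρ → CoversF ρ ν → CoversF μ l → CoversF l ν →
    ρ ≠ l → κ μ l * κ μ ρ = κ l ν * κ ρ ν

/-- The value of a function `q : P → R` on the box `l ∖ μ` of an edge `μ ↗ l`. -/
noncomputable def bx {R : Type*} [AddCommMonoid R] (q : P → R) (μ l : Finset P) : R :=
  ∑ x ∈ l \ μ, q x

/-- The Kerov condition with parameter `t` for the function `q2 = 𝗊²`. -/
def KerovCond (κ : Finset P → Finset P → ℝ) (q2 : P → ℂ) (t : ℂ) : Prop :=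
  ∀ l : Finset P, IsIdealF l →
    (∑' ν : {ν : Finset P // CoversF l ν}, (κ l ν.1 : ℂ) ^ 2 * bx q2 l ν.1) -
      (∑' μ : {μ : Finset P // CoversF μ l}, (κ μ.1 l : ℂ) ^ 2 * bx q2 μ.1 l)
      = 2 * (l.card : ℂ) + t

/-- Weighted number of saturated chains of length `n` from the ideal `μ` up to the ideal `l`. -/
noncomputable def dimRel (κ : Finset P → Finset P → ℝ) : ℕ → Finset P → Finset P → ℝ
  | 0, μ, l => if μ = l then 1 else 0
  | n + 1, μ, l =>
      ∑ x ∈ l, if CoversF (l.erase x) l ∧ μ ⊆ l.erase x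
        then κ (l.erase x) l * dimRel κ n μ (l.erase x) else 0

/-- Relative dimension `dim(μ, l)`. -/
noncomputable def dimI (κ : Finset P → Finset P → ℝ) (μ l : Finset P) : ℝ :=
  dimRel κ (l.card - μ.card) μ l

/-- Dimension `dim l = dim(∅, l)`. -/
noncomputable def dimT (κ : Finset P → Finset P → ℝ) (l : Finset P) : ℝ :=
  dimI κ ∅ l

/-- The relative dimension function `P*_μ`. -/
noncomputable def Pstar (κ : Finset P → Finset P → ℝ) (μ l : Finset P) : ℝ :=
  (l.card.descFactorial μ.card : ℝ) * dimI κ μ l / dimT κ l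

/-- The mixed measure `M_ξ`. -/
noncomputable def Mxi (κ : Finset P → Finset P → ℝ) (q : P → ℝ) (t ξ : ℝ) (l : Finset P) : ℝ :=
  (1 - ξ) ^ t * ξ ^ l.card * (dimT κ l / (Nat.factorial l.card : ℝ)) ^ 2 * ∏ x ∈ l, q x ^ 2

/-- The coherent measure `M_n(l)` (for `n = |l|`). -/
noncomputable def Mcoh (κ : Finset P → Finset P → ℝ) (q : P → ℝ) (t : ℝ) (l : Finset P) : ℝ :=
  dimT κ l ^ 2 * (∏ x ∈ l, q x ^ 2) /
    ((Nat.factorial l.card : ℝ) * Polynomial.eval t (ascPochhammer ℝ l.card))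

/-- The jump rates `Q(l, ρ)` of the Markov jump dynamics. -/
noncomputable def Qrate (κ : Finset P → Finset P → ℝ) (q : P → ℝ) (t ξ : ℝ)
    (l ρ : Finset P) : ℝ :=
  if CoversF ρ l then (1 - ξ)⁻¹ * l.card * (κ ρ l * dimT κ ρ / dimT κ l)
  else if CoversF l ρ then
    (1 - ξ)⁻¹ * (ξ * ((l.card : ℝ) + t)) *
      ((Mcoh κ q t ρ / Mcoh κ q t l) * (κ l ρ * dimT κ l / dimT κ ρ))
  else if ρ = l then -((1 - ξ)⁻¹ * ((l.card : ℝ) + ξ * ((l.card : ℝ) + t)))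
  else 0

/-- The function `𝔐_l`. -/
noncomputable def Mfrak (κ : Finset P → Finset P → ℝ) (q : P → ℝ) (ξ : ℝ)
    (l ν : Finset P) : ℝ :=
  ∑ μ ∈ l.powerset.filter (fun s => IsIdealF s),
    (ξ / (ξ - 1)) ^ (l.card - μ.card) *
      (dimI κ μ l / (Nat.factorial (l.card - μ.card) : ℝ)) *
      (∏ x ∈ l \ μ, q x ^ 2) * Pstar κ μ ν

/-- The operator `U` built from `κ` and `q`. -/
noncomputable def Uop (κ : Finset P → Finset P → ℝ) (q : P → ℂ) (f : Finset P → ℂ) :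
    Finset P → ℂ :=
  fun l => ∑' μ : {μ : Finset P // CoversF μ l}, (κ μ.1 l : ℂ) * bx q μ.1 l * f μ.1

/-- The operator `D` built from `κ` and `q`. -/
noncomputable def Dop (κ : Finset P → Finset P → ℝ) (q : P → ℂ) (f : Finset P → ℂ) :
    Finset P → ℂ :=
  fun l => ∑' ν : {ν : Finset P // CoversF l ν}, (κ l ν.1 : ℂ) * bx q l ν.1 * f ν.1

/-- The standard basis vector `δ_l`. -/
noncomputable def delta (l : Finset P) : Finset P → ℂ := fun ρ => if ρ = l then 1 else 0


set_option linter.unusedSectionVars false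
set_option linter.unusedVariables false

section Aux

-- basic ideal lemmas
lemma isIdealF_union {s t : Finset P} (hs : IsIdealF s) (ht : IsIdealF t) :
    IsIdealF (s ∪ t) := by
  intro x hx y hy
  rcases Finset.mem_union.1 hx with h | h
  · exact Finset.mem_union.2 (Or.inl (hs h hy))
  · exact Finset.mem_union.2 (Or.inr (ht h hy))

lemma isIdealF_inter {s t : Finset P} (hs : IsIdealF s) (ht : IsIdealF t) :
    IsIdealF (s ∩ t) := by
  intro x hx y hy
  rcases Finset.mem_inter.1 hx with ⟨h1, h2⟩
  exact Finset.mem_inter.2 ⟨hs h1 hy, ht h2 hy⟩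

lemma isIdealF_empty : IsIdealF (∅ : Finset P) := by intro x hx; simp at hx

lemma covers_sdiff {μ l : Finset P} (h : CoversF μ l) :
    ∃ a, l \ μ = {a} ∧ a ∉ μ ∧ l = insert a μ := by
  have hc : (l \ μ).card = 1 := by
    rw [Finset.card_sdiff_of_subset h.2.2.1, h.2.2.2]; omega
  rcases Finset.card_eq_one.1 hc with ⟨a, ha⟩
  have haμ : a ∉ μ := by
    have : a ∈ l \ μ := by rw [ha]; exact Finset.mem_singleton_self a
    exact (Finset.mem_sdiff.1 this).2
  refine ⟨a, ha, haμ, ?_⟩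
  have := Finset.union_sdiff_of_subset h.2.2.1
  rw [ha] at this
  rw [← this, Finset.union_comm]; rfl

lemma bx_covers {R : Type*} [AddCommMonoid R] (q : P → R) {μ l : Finset P} {a : P}
    (ha : l \ μ = {a}) : bx q μ l = q a := by
  rw [bx, ha, Finset.sum_singleton]

lemma bx_sq_covers (q : P → ℝ) {μ l : Finset P} (h : CoversF μ l) :
    (bx q μ l) ^ 2 = bx (fun x => q x ^ 2) μ l := by
  rcases covers_sdiff h with ⟨a, ha, -, -⟩
  rw [bx_covers q ha, bx_covers _ ha]


variable {κ : Finset P → Finset P → ℝ}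

/-- the finset of ideals covered by l -/
noncomputable def dwn (l : Finset P) : Finset (Finset P) :=
  l.powerset.filter (fun ϰ => CoversF ϰ l)

lemma mem_dwn {l ϰ : Finset P} : ϰ ∈ dwn l ↔ CoversF ϰ l := by
  simp only [dwn, Finset.mem_filter, Finset.mem_powerset, and_iff_right_iff_imp]
  exact fun h => h.2.2.1

/-- the finset of ideals covering l -/
noncomputable def up (hLF : LevelsFinite P) (l : Finset P) : Finset (Finset P) :=
  ((hLF (l.card + 1)).toFinset).filter (fun ν => CoversF l ν)

lemma mem_up {hLF : LevelsFinite P} {l ν : Finset P} : ν ∈ up hLF l ↔ CoversF l ν := by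
  simp only [up, Finset.mem_filter, Set.Finite.mem_toFinset, Set.mem_setOf_eq,
    and_iff_right_iff_imp]
  exact fun h => ⟨h.2.1, h.2.2.2⟩

/-- convert tsums over subtypes into finite sums -/
lemma tsum_subtype_eq {M : Type*} [AddCommMonoid M] [TopologicalSpace M] [T2Space M]
    (p : Finset P → Prop) (E : Finset (Finset P)) (hE : ∀ x, x ∈ E ↔ p x)
    (f : Finset P → M) : ∑' x : {x // p x}, f x.1 = ∑ x ∈ E, f x := by
  haveI : Fintype {x // p x} := Fintype.ofFinset E hE
  rw [tsum_fintype, Finset.sum_subtype E hE f]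

lemma dimRel_nonneg (hκ : EdgePositive κ) : ∀ (n : ℕ) (μ l : Finset P), 0 ≤ dimRel κ n μ l
  | 0, μ, l => by rw [dimRel]; split <;> norm_num
  | n + 1, μ, l => by
    rw [dimRel]
    refine Finset.sum_nonneg fun x hx => ?_
    split
    · next h => exact mul_nonneg (hκ _ _ h.1).le (dimRel_nonneg hκ n μ _)
    · exact le_rfl

lemma dimRel_ne_zero : ∀ (n : ℕ) (μ l : Finset P), dimRel κ n μ l ≠ 0 →
    μ ⊆ l ∧ l.card = μ.card + n
  | 0, μ, l => by
    rw [dimRel]; split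
    · next h => subst h; simp
    · next h => intro hc; simp at hc
  | n + 1, μ, l => by
    rw [dimRel]
    intro h
    rcases Finset.exists_ne_zero_of_sum_ne_zero h with ⟨x, hx, hne⟩
    rw [ne_eq, ite_eq_right_iff, not_forall] at hne
    rcases hne with ⟨⟨hcov, hsub⟩, hne2⟩
    have hmul : dimRel κ n μ (l.erase x) ≠ 0 := by
      intro h0; exact hne2 (by rw [h0, mul_zero])
    have := dimRel_ne_zero n μ (l.erase x) hmul
    constructor
    · exact this.1.trans (Finset.erase_subset x l)
    · have hce : (l.erase x).card = l.card - 1 := Finset.card_erase_of_mem hx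
      have hlpos : 0 < l.card := Finset.card_pos.2 ⟨x, hx⟩
      omega

lemma dimI_ne_zero_subset {μ l : Finset P} (h : dimI κ μ l ≠ 0) : μ ⊆ l :=
  (dimRel_ne_zero _ _ _ h).1

lemma dimI_self (l : Finset P) : dimI κ l l = 1 := by
  rw [dimI, Nat.sub_self, dimRel, if_pos rfl]

lemma dimI_nonneg (hκ : EdgePositive κ) (μ l : Finset P) : 0 ≤ dimI κ μ l :=
  dimRel_nonneg hκ _ _ _

/-- maximal element of a nonempty ideal can be erased to give an ideal -/
lemma exists_covers_of_ideal {l : Finset P} (hl : IsIdealF l) (hne : l.Nonempty) :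
    ∃ a ∈ l, CoversF (l.erase a) l := by
  rcases l.exists_maximal hne with ⟨a, ha, hmax⟩
  refine ⟨a, ha, ?_, hl, Finset.erase_subset a l, by
    rw [Finset.card_erase_of_mem ha]
    have : 0 < l.card := Finset.card_pos.2 ⟨a, ha⟩
    omega⟩
  intro x hx y hy
  have hxl : x ∈ l := Finset.mem_of_mem_erase hx
  have hyl : y ∈ l := hl hxl hy
  have hya : y ≠ a := by
    intro h; subst h
    exact (Finset.mem_erase.1 hx).1 (le_antisymm hy (hmax hxl hy)).symm
  exact Finset.mem_erase.2 ⟨hya, hyl⟩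

lemma card_eq_zero_ideal {l : Finset P} (h : l.card = 0) : l = ∅ := Finset.card_eq_zero.1 h

lemma dimT_pos (hκ : EdgePositive κ) : ∀ (n : ℕ) (l : Finset P), IsIdealF l → l.card = n →
    0 < dimT κ l
  | 0, l, hl, hc => by
    rw [card_eq_zero_ideal hc]
    rw [dimT, dimI]; norm_num [dimRel]
  | n + 1, l, hl, hc => by
    have hne : l.Nonempty := Finset.card_pos.1 (by omega)
    rcases exists_covers_of_ideal hl hne with ⟨a, ha, hcov⟩
    rw [dimT, dimI, Finset.card_empty, Nat.sub_zero, hc, dimRel]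
    have hterm : ∀ x ∈ l, 0 ≤ if CoversF (l.erase x) l ∧ (∅ : Finset P) ⊆ l.erase x
        then κ (l.erase x) l * dimRel κ n ∅ (l.erase x) else 0 := by
      intro x hx
      split
      · next h => exact mul_nonneg (hκ _ _ h.1).le (dimRel_nonneg hκ n ∅ _)
      · exact le_rfl
    refine Finset.sum_pos' hterm ⟨a, ha, ?_⟩
    rw [if_pos ⟨hcov, Finset.empty_subset _⟩]
    have hcard : (l.erase a).card = n := by
      rw [Finset.card_erase_of_mem ha]; omega
    have hpos : 0 < dimT κ (l.erase a) := dimT_pos hκ n (l.erase a) hcov.1 hcard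
    rw [dimT, dimI, Finset.card_empty, Nat.sub_zero, hcard] at hpos
    exact mul_pos (hκ _ _ hcov) hpos

lemma dimT_pos' (hκ : EdgePositive κ) {l : Finset P} (hl : IsIdealF l) : 0 < dimT κ l :=
  dimT_pos hκ l.card l hl rfl

/-- reindexing sums over erased elements as sums over `dwn` -/
lemma sum_erase_eq_sum_dwn (l : Finset P) (F : Finset P → ℝ)
    (hF : ∀ ϰ, ¬ CoversF ϰ l → F ϰ = 0) :
    ∑ x ∈ l, F (l.erase x) = ∑ ϰ ∈ dwn l, F ϰ := by
  classical
  have hsplit : ∑ x ∈ l, F (l.erase x)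
      = ∑ x ∈ l.filter (fun x => CoversF (l.erase x) l), F (l.erase x) := by
    rw [Finset.sum_filter_of_ne]
    intro x hx hne
    by_contra hcov
    exact hne (hF _ hcov)
  rw [hsplit]
  refine Finset.sum_bij (fun x _ => l.erase x) ?_ ?_ ?_ ?_
  · intro x hx
    rw [mem_dwn]
    exact (Finset.mem_filter.1 hx).2
  · intro x hx y hy hxy
    by_contra hne
    have hxl : x ∈ l := (Finset.mem_filter.1 hx).1
    have : x ∈ l.erase y := Finset.mem_erase.2 ⟨fun h => hne (h ▸ rfl) , hxl⟩
    rw [← hxy] at this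
    exact (Finset.mem_erase.1 this).1 rfl
  · intro ϰ hϰ
    have hcov := mem_dwn.1 hϰ
    have hc1 : (l \ ϰ).card = 1 := by
      rw [Finset.card_sdiff_of_subset hcov.2.2.1, hcov.2.2.2]; omega
    rcases Finset.card_eq_one.1 hc1 with ⟨a, ha⟩
    have hal : a ∈ l ∧ a ∉ ϰ := by
      have : a ∈ l \ ϰ := ha ▸ Finset.mem_singleton_self a
      exact ⟨(Finset.mem_sdiff.1 this).1, (Finset.mem_sdiff.1 this).2⟩
    have herase : l.erase a = ϰ := by
      apply Finset.Subset.antisymm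
      · intro y hy
        rcases Finset.mem_erase.1 hy with ⟨hya, hyl⟩
        by_contra hyϰ
        have : y ∈ l \ ϰ := Finset.mem_sdiff.2 ⟨hyl, hyϰ⟩
        rw [ha, Finset.mem_singleton] at this
        exact hya this
      · intro y hy
        exact Finset.mem_erase.2 ⟨fun h => hal.2 (h ▸ hy), hcov.2.2.1 hy⟩
    exact ⟨a, Finset.mem_filter.2 ⟨hal.1, herase ▸ hcov⟩, herase⟩
  · intro x hx; rfl

/-- the unnormalized function d_μ(l) = dim(μ,l) ∏_{x ∈ l∖μ} q(x) -/
noncomputable def dd (κ : Finset P → Finset P → ℝ) (q : P → ℝ) (μ l : Finset P) : ℝ :=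
  dimI κ μ l * ∏ x ∈ l \ μ, q x

lemma dd_eq_zero {q : P → ℝ} {μ l : Finset P} (h : ¬ μ ⊆ l) : dd κ q μ l = 0 := by
  rw [dd]
  have : dimI κ μ l = 0 := by
    by_contra hne; exact h (dimI_ne_zero_subset hne)
  rw [this, zero_mul]

lemma dd_self (q : P → ℝ) (l : Finset P) : dd κ q l l = 1 := by
  rw [dd, dimI_self, Finset.sdiff_self, Finset.prod_empty, one_mul]

lemma dd_card_lt {q : P → ℝ} {μ l : Finset P} (h : l.card < μ.card) : dd κ q μ l = 0 := by
  apply dd_eq_zero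
  intro hsub
  exact absurd (Finset.card_le_card hsub) (by omega)

lemma dd_card_eq {q : P → ℝ} {μ l : Finset P} (h : l.card = μ.card) (hne : l ≠ μ) :
    dd κ q μ l = 0 := by
  apply dd_eq_zero
  intro hsub
  exact hne (Finset.eq_of_subset_of_card_le hsub (le_of_eq h)).symm

/-- Key identity A : `U d_μ = d_μ - δ_μ` pointwise. -/
lemma keyA (q : P → ℝ) (μ l : Finset P) :
    ∑ ϰ ∈ dwn l, κ ϰ l * bx q ϰ l * dd κ q μ ϰ
      = dd κ q μ l - (if l = μ then 1 else 0) := by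
  by_cases hlμ : l = μ
  · subst hlμ
    rw [if_pos rfl, dd_self, sub_self]
    refine Finset.sum_eq_zero fun ϰ hϰ => ?_
    have hcov := mem_dwn.1 hϰ
    have hcc := hcov.2.2.2
    rw [dd_card_lt (by omega : ϰ.card < l.card), mul_zero]
  · rw [if_neg hlμ, sub_zero]
    by_cases hsub : μ ⊆ l
    · -- μ ⊊ l
      have hlt : μ.card < l.card := by
        rcases Finset.card_lt_card (lt_of_le_of_ne hsub (fun h => hlμ h.symm)) with h
        exact h
      obtain ⟨k, hk⟩ : ∃ k, l.card - μ.card = k + 1 := ⟨l.card - μ.card - 1, by omega⟩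
      have hrec : dimI κ μ l = ∑ ϰ ∈ dwn l,
          (if CoversF ϰ l ∧ μ ⊆ ϰ then κ ϰ l * dimRel κ k μ ϰ else 0) := by
        rw [dimI, hk, dimRel]
        refine sum_erase_eq_sum_dwn l
          (fun ϰ => if CoversF ϰ l ∧ μ ⊆ ϰ then κ ϰ l * dimRel κ k μ ϰ else 0)
          (fun ϰ hϰ => if_neg (fun hc => hϰ hc.1))
      rw [dd, hrec, Finset.sum_mul]
      refine Finset.sum_congr rfl fun ϰ hϰ => ?_
      have hcov := mem_dwn.1 hϰ
      by_cases hμϰ : μ ⊆ ϰ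
      · rw [if_pos ⟨hcov, hμϰ⟩]
        rcases covers_sdiff hcov with ⟨a, ha, haϰ, hins⟩
        have hbx : bx q ϰ l = q a := by rw [bx, ha, Finset.sum_singleton]
        have hdim : dimRel κ k μ ϰ = dimI κ μ ϰ := by
          rw [dimI]
          congr 1
          have h1 : l.card = ϰ.card + 1 := hcov.2.2.2
          have h2 : μ.card ≤ ϰ.card := Finset.card_le_card hμϰ
          omega
        have haμ : a ∉ μ := fun h => haϰ (hμϰ h)
        have hset : l \ μ = insert a (ϰ \ μ) := by
          rw [hins, Finset.insert_sdiff_of_notMem _ haμ]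
        have hprod : ∏ x ∈ l \ μ, q x = q a * ∏ x ∈ ϰ \ μ, q x := by
          rw [hset, Finset.prod_insert (fun h => haϰ (Finset.mem_sdiff.1 h).1)]
        rw [hbx, hdim, dd, hprod]
        ring
      · rw [if_neg (fun h => hμϰ h.2), dd_eq_zero hμϰ, mul_zero, zero_mul]
    · -- ¬ μ ⊆ l : both sides vanish
      rw [dd_eq_zero hsub]
      refine Finset.sum_eq_zero fun ϰ hϰ => ?_
      have hcov := mem_dwn.1 hϰ
      have : ¬ μ ⊆ ϰ := fun h => hsub (h.trans hcov.2.2.1)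
      rw [dd_eq_zero this, mul_zero]



/-- quadrangle from two sides with common top -/
lemma top_of_sides {l ϰ ν : Finset P} (hlν : CoversF l ν) (hϰν : CoversF ϰ ν) (hne : ϰ ≠ l) :
    ν = l ∪ ϰ ∧ CoversF (l ∩ ϰ) l ∧ CoversF (l ∩ ϰ) ϰ := by
  have hcards : ϰ.card = l.card := by
    have h1 := hlν.2.2.2; have h2 := hϰν.2.2.2; omega
  have hsub : l ∪ ϰ ⊆ ν := Finset.union_subset hlν.2.2.1 hϰν.2.2.1
  have hlt : l.card < (l ∪ ϰ).card := by
    apply Finset.card_lt_card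
    refine ⟨Finset.subset_union_left, fun hc => hne ?_⟩
    exact Finset.eq_of_subset_of_card_le ((Finset.subset_union_right).trans hc)
      (le_of_eq hcards.symm)
  have hν : ν = l ∪ ϰ := by
    refine (Finset.eq_of_subset_of_card_le hsub ?_).symm
    have := hlν.2.2.2; omega
  have hcap : (l ∩ ϰ).card + 1 = l.card := by
    have := Finset.card_inter_add_card_union l ϰ
    have hν' : (l ∪ ϰ).card = l.card + 1 := by rw [← hν]; exact hlν.2.2.2
    omega
  have hid : IsIdealF (l ∩ ϰ) := isIdealF_inter hlν.1 hϰν.1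
  exact ⟨hν, ⟨hid, hlν.1, Finset.inter_subset_left, hcap.symm⟩,
    ⟨hid, hϰν.1, Finset.inter_subset_right, by omega⟩⟩

/-- quadrangle from two sides with common bottom -/
lemma bottom_of_sides {l σ ρ : Finset P} (hρl : CoversF ρ l) (hρσ : CoversF ρ σ) (hne : σ ≠ l) :
    ρ = l ∩ σ ∧ CoversF l (l ∪ σ) ∧ CoversF σ (l ∪ σ) := by
  have hcards : σ.card = l.card := by
    have h1 := hρl.2.2.2; have h2 := hρσ.2.2.2; omega
  have hsub : ρ ⊆ l ∩ σ := Finset.subset_inter hρl.2.2.1 hρσ.2.2.1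
  have hlt : (l ∩ σ).card < l.card := by
    apply Finset.card_lt_card
    refine ⟨Finset.inter_subset_left, fun hc => hne ?_⟩
    have hls : l ⊆ σ := (hc.trans Finset.inter_subset_right)
    exact (Finset.eq_of_subset_of_card_le hls (le_of_eq hcards)).symm
  have hρeq : ρ = l ∩ σ := by
    apply Finset.eq_of_subset_of_card_le hsub
    have := hρl.2.2.2; omega
  have hcup : (l ∪ σ).card = l.card + 1 := by
    have := Finset.card_inter_add_card_union l σ
    have : (l ∩ σ).card = l.card - 1 := by
      have h1 := hρl.2.2.2; rw [← hρeq]; omega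
    omega
  have hid : IsIdealF (l ∪ σ) := isIdealF_union hρl.2.1 hρσ.2.1
  exact ⟨hρeq, ⟨hρl.2.1, hid, Finset.subset_union_left, hcup⟩,
    ⟨hρσ.2.1, hid, Finset.subset_union_right, by omega⟩⟩

/-- real form of the Kerov condition -/
lemma kerovR (hLF : LevelsFinite P) {q : P → ℝ} {t : ℝ}
    (hK : KerovCond κ (fun x => ((q x : ℂ)) ^ 2) (t : ℂ)) {l : Finset P} (hl : IsIdealF l) :
    (∑ ν ∈ up hLF l, (κ l ν) ^ 2 * (bx q l ν) ^ 2)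
      - (∑ ϰ ∈ dwn l, (κ ϰ l) ^ 2 * (bx q ϰ l) ^ 2) = 2 * l.card + t := by
  have h := hK l hl
  rw [tsum_subtype_eq (fun ν => CoversF l ν) (up hLF l) (fun ν => mem_up)
      (fun ν => (κ l ν : ℂ) ^ 2 * bx (fun x => ((q x : ℂ)) ^ 2) l ν)] at h
  rw [tsum_subtype_eq (fun μ => CoversF μ l) (dwn l) (fun μ => mem_dwn)
      (fun μ => (κ μ l : ℂ) ^ 2 * bx (fun x => ((q x : ℂ)) ^ 2) μ l)] at h
  have hA : ∑ ν ∈ up hLF l, (κ l ν : ℂ) ^ 2 * bx (fun x => ((q x : ℂ)) ^ 2) l ν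
      = ((∑ ν ∈ up hLF l, (κ l ν) ^ 2 * (bx q l ν) ^ 2 : ℝ) : ℂ) := by
    push_cast
    refine Finset.sum_congr rfl fun ν hν => ?_
    congr 1
    rw [← Complex.ofReal_pow, bx_sq_covers q (mem_up.1 hν), bx, bx]
    push_cast
    rfl
  have hB : ∑ μ ∈ dwn l, (κ μ l : ℂ) ^ 2 * bx (fun x => ((q x : ℂ)) ^ 2) μ l
      = ((∑ μ ∈ dwn l, (κ μ l) ^ 2 * (bx q μ l) ^ 2 : ℝ) : ℂ) := by
    push_cast
    refine Finset.sum_congr rfl fun μ hμ => ?_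
    congr 1
    rw [← Complex.ofReal_pow, bx_sq_covers q (mem_dwn.1 hμ), bx, bx]
    push_cast
    rfl
  rw [hA, hB] at h
  exact_mod_cast h

/-- Off-diagonal part of the commutation relation -/
lemma off_eq (hLF : LevelsFinite P) (hUD : UDSelfDual κ) (q : P → ℝ) {l : Finset P}
    (g : Finset P → ℝ) :
    ∑ ν ∈ up hLF l, ∑ ϰ ∈ (dwn ν).erase l, (κ l ν * bx q l ν) * (κ ϰ ν * bx q ϰ ν * g ϰ)
      = ∑ ρ ∈ dwn l, ∑ σ ∈ (up hLF ρ).erase l, (κ ρ l * bx q ρ l) * (κ ρ σ * bx q ρ σ * g σ) := by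
  rw [Finset.sum_sigma' (up hLF l) (fun ν => (dwn ν).erase l)
      (fun ν ϰ => (κ l ν * bx q l ν) * (κ ϰ ν * bx q ϰ ν * g ϰ)),
    Finset.sum_sigma' (dwn l) (fun ρ => (up hLF ρ).erase l)
      (fun ρ σ => (κ ρ l * bx q ρ l) * (κ ρ σ * bx q ρ σ * g σ))]
  refine Finset.sum_nbij' (fun x => ⟨l ∩ x.2, x.2⟩) (fun y => ⟨l ∪ y.2, y.2⟩) ?_ ?_ ?_ ?_ ?_
  · rintro ⟨ν, ϰ⟩ hx
    rcases Finset.mem_sigma.1 hx with ⟨hν, hϰ⟩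
    rcases Finset.mem_erase.1 hϰ with ⟨hne, hϰd⟩
    obtain ⟨hνeq, hc1, hc2⟩ := top_of_sides (mem_up.1 hν) (mem_dwn.1 hϰd) hne
    exact Finset.mem_sigma.2 ⟨mem_dwn.2 hc1, Finset.mem_erase.2 ⟨hne, mem_up.2 hc2⟩⟩
  · rintro ⟨ρ, σ⟩ hy
    rcases Finset.mem_sigma.1 hy with ⟨hρ, hσ⟩
    rcases Finset.mem_erase.1 hσ with ⟨hne, hσu⟩
    obtain ⟨hρeq, hc1, hc2⟩ := bottom_of_sides (mem_dwn.1 hρ) (mem_up.1 hσu) hne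
    exact Finset.mem_sigma.2 ⟨mem_up.2 hc1, Finset.mem_erase.2 ⟨hne, mem_dwn.2 hc2⟩⟩
  · rintro ⟨ν, ϰ⟩ hx
    rcases Finset.mem_sigma.1 hx with ⟨hν, hϰ⟩
    rcases Finset.mem_erase.1 hϰ with ⟨hne, hϰd⟩
    obtain ⟨hνeq, -, -⟩ := top_of_sides (mem_up.1 hν) (mem_dwn.1 hϰd) hne
    simp only []
    congr 1
    exact hνeq.symm
  · rintro ⟨ρ, σ⟩ hy
    rcases Finset.mem_sigma.1 hy with ⟨hρ, hσ⟩
    rcases Finset.mem_erase.1 hσ with ⟨hne, hσu⟩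
    obtain ⟨hρeq, -, -⟩ := bottom_of_sides (mem_dwn.1 hρ) (mem_up.1 hσu) hne
    simp only []
    congr 1
    exact hρeq.symm
  · rintro ⟨ν, ϰ⟩ hx
    simp only [Finset.mem_sigma, Finset.mem_erase] at hx
    obtain ⟨hν, hne, hϰd⟩ := hx
    have hlν := mem_up.1 hν
    have hϰν := mem_dwn.1 hϰd
    dsimp only at hlν hϰν hne ⊢
    obtain ⟨hνeq, hc1, hc2⟩ := top_of_sides hlν hϰν hne
    have e1 : ν \ l = ϰ \ (l ∩ ϰ) := by
      rw [hνeq, Finset.union_sdiff_left, Finset.sdiff_inter_self_right]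
    have e2 : ν \ ϰ = l \ (l ∩ ϰ) := by
      rw [hνeq, Finset.union_sdiff_right, Finset.sdiff_inter_self_left]
    have hb1 : bx q l ν = bx q (l ∩ ϰ) ϰ := by rw [bx, bx, e1]
    have hb2 : bx q ϰ ν = bx q (l ∩ ϰ) l := by rw [bx, bx, e2]
    have hκκ := hUD (l ∩ ϰ) ϰ l ν hc2 hϰν hc1 hlν hne
    rw [hb1, hb2]
    linear_combination (-(bx q (l ∩ ϰ) ϰ * bx q (l ∩ ϰ) l * g ϰ)) * hκκ

/-- The commutation relation DU = UD + (2n + t) pointwise at an ideal l. -/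
lemma commD (hLF : LevelsFinite P) (hUD : UDSelfDual κ) {q : P → ℝ} {t : ℝ}
    (hK : KerovCond κ (fun x => ((q x : ℂ)) ^ 2) (t : ℂ)) {l : Finset P} (hl : IsIdealF l)
    (g : Finset P → ℝ) :
    ∑ ν ∈ up hLF l, κ l ν * bx q l ν * (∑ ϰ ∈ dwn ν, κ ϰ ν * bx q ϰ ν * g ϰ)
      = (∑ ϰ ∈ dwn l, κ ϰ l * bx q ϰ l * (∑ ν ∈ up hLF ϰ, κ ϰ ν * bx q ϰ ν * g ν))
        + (2 * l.card + t) * g l := by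
  have hLsplit : ∑ ν ∈ up hLF l, κ l ν * bx q l ν * (∑ ϰ ∈ dwn ν, κ ϰ ν * bx q ϰ ν * g ϰ)
      = (∑ ν ∈ up hLF l, (κ l ν) ^ 2 * (bx q l ν) ^ 2) * g l
        + ∑ ν ∈ up hLF l, ∑ ϰ ∈ (dwn ν).erase l,
            (κ l ν * bx q l ν) * (κ ϰ ν * bx q ϰ ν * g ϰ) := by
    rw [Finset.sum_mul, ← Finset.sum_add_distrib]
    refine Finset.sum_congr rfl fun ν hν => ?_
    rw [← Finset.add_sum_erase _ _ (mem_dwn.2 (mem_up.1 hν)), mul_add, Finset.mul_sum]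
    congr 1
    ring
  have hRsplit : ∑ ϰ ∈ dwn l, κ ϰ l * bx q ϰ l * (∑ ν ∈ up hLF ϰ, κ ϰ ν * bx q ϰ ν * g ν)
      = (∑ ϰ ∈ dwn l, (κ ϰ l) ^ 2 * (bx q ϰ l) ^ 2) * g l
        + ∑ ϰ ∈ dwn l, ∑ ν ∈ (up hLF ϰ).erase l,
            (κ ϰ l * bx q ϰ l) * (κ ϰ ν * bx q ϰ ν * g ν) := by
    rw [Finset.sum_mul, ← Finset.sum_add_distrib]
    refine Finset.sum_congr rfl fun ϰ hϰ => ?_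
    rw [← Finset.add_sum_erase _ _ (mem_up.2 (mem_dwn.1 hϰ)), mul_add, Finset.mul_sum]
    congr 1
    ring
  rw [hLsplit, hRsplit, off_eq hLF hUD q g]
  have hker := kerovR hLF hK hl (κ := κ)
  have : (∑ ν ∈ up hLF l, (κ l ν) ^ 2 * (bx q l ν) ^ 2)
      = (∑ ϰ ∈ dwn l, (κ ϰ l) ^ 2 * (bx q ϰ l) ^ 2) + (2 * l.card + t) := by
    linarith [hker]
  rw [this]
  ring

lemma dwn_empty : dwn (∅ : Finset P) = ∅ := by
  ext ϰ
  simp only [mem_dwn, Finset.notMem_empty, iff_false]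
  intro h
  have := h.2.2.2
  simp at this

/-- Key identity B : the action of D on d_μ. -/
lemma keyB (hLF : LevelsFinite P) (hUD : UDSelfDual κ) {q : P → ℝ} {t : ℝ}
    (hK : KerovCond κ (fun x => ((q x : ℂ)) ^ 2) (t : ℂ)) :
    ∀ (n : ℕ) (l μ : Finset P), IsIdealF l → l.card = n →
    ∑ ν ∈ up hLF l, κ l ν * bx q l ν * dd κ q μ ν
      = ((n : ℝ) - μ.card + 1) * ((n : ℝ) + μ.card + t) * dd κ q μ l
        + ∑ ρ ∈ dwn μ, κ ρ μ * bx q ρ μ * dd κ q ρ l := by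
  intro n
  induction n using Nat.strong_induction_on with
  | _ n ih =>
  intro l μ hl hc
  -- Step 1 : expand dd μ ν by keyA at each ν
  have step1 : ∑ ν ∈ up hLF l, κ l ν * bx q l ν * dd κ q μ ν
      = (∑ ν ∈ up hLF l, κ l ν * bx q l ν *
          (∑ ϰ ∈ dwn ν, κ ϰ ν * bx q ϰ ν * dd κ q μ ϰ))
        + (if CoversF l μ then κ l μ * bx q l μ else 0) := by
    have hterm : ∀ ν ∈ up hLF l, κ l ν * bx q l ν * dd κ q μ ν
        = κ l ν * bx q l ν * (∑ ϰ ∈ dwn ν, κ ϰ ν * bx q ϰ ν * dd κ q μ ϰ)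
          + (if ν = μ then κ l ν * bx q l ν else 0) := by
      intro ν hν
      have hA := keyA (κ := κ) q μ ν
      have hdd : dd κ q μ ν = (∑ ϰ ∈ dwn ν, κ ϰ ν * bx q ϰ ν * dd κ q μ ϰ)
          + (if ν = μ then 1 else 0) := by linarith
      rw [hdd, mul_add, mul_ite, mul_one, mul_zero]
    rw [Finset.sum_congr rfl hterm, Finset.sum_add_distrib]
    congr 1
    rw [Finset.sum_ite_eq' (up hLF l) μ (fun ν => κ l ν * bx q l ν)]
    by_cases hcm : CoversF l μ
    · rw [if_pos (mem_up.2 hcm), if_pos hcm]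
    · rw [if_neg (fun h => hcm (mem_up.1 h)), if_neg hcm]
  -- Step 2 : commutation relation
  have step2 := commD hLF hUD hK hl (fun ϰ => dd κ q μ ϰ)
  -- Step 3 : induction hypothesis at each ϰ ∈ dwn l
  have step3 : ∀ ϰ ∈ dwn l, (∑ ν ∈ up hLF ϰ, κ ϰ ν * bx q ϰ ν * dd κ q μ ν)
      = ((n : ℝ) - μ.card) * ((n : ℝ) - 1 + μ.card + t) * dd κ q μ ϰ
        + ∑ ρ ∈ dwn μ, κ ρ μ * bx q ρ μ * dd κ q ρ ϰ := by
    intro ϰ hϰ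
    have hcov := mem_dwn.1 hϰ
    have hcard : ϰ.card + 1 = n := by rw [← hc]; exact hcov.2.2.2.symm
    have hlt : ϰ.card < n := by omega
    have := ih ϰ.card hlt ϰ μ hcov.1 rfl
    rw [this]
    have hcast : (ϰ.card : ℝ) = (n : ℝ) - 1 := by
      have : ((ϰ.card : ℕ) : ℝ) + 1 = (n : ℝ) := by exact_mod_cast congrArg Nat.cast hcard
      linarith
    rw [hcast]
    ring_nf
  -- Step 4 : put everything together
  rw [step1, step2]
  have step4 : ∑ ϰ ∈ dwn l, κ ϰ l * bx q ϰ l *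
      (∑ ν ∈ up hLF ϰ, κ ϰ ν * bx q ϰ ν * dd κ q μ ν)
      = ((n : ℝ) - μ.card) * ((n : ℝ) - 1 + μ.card + t) *
          (∑ ϰ ∈ dwn l, κ ϰ l * bx q ϰ l * dd κ q μ ϰ)
        + ∑ ρ ∈ dwn μ, κ ρ μ * bx q ρ μ *
            (∑ ϰ ∈ dwn l, κ ϰ l * bx q ϰ l * dd κ q ρ ϰ) := by
    rw [Finset.sum_congr rfl (fun ϰ hϰ => by rw [step3 ϰ hϰ])]
    simp only [mul_add]
    rw [Finset.sum_add_distrib]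
    congr 1
    · rw [Finset.mul_sum]
      refine Finset.sum_congr rfl fun ϰ hϰ => ?_
      ring
    · rw [show (∑ ϰ ∈ dwn l, κ ϰ l * bx q ϰ l * ∑ ρ ∈ dwn μ, κ ρ μ * bx q ρ μ * dd κ q ρ ϰ)
          = ∑ ϰ ∈ dwn l, ∑ ρ ∈ dwn μ, κ ϰ l * bx q ϰ l * (κ ρ μ * bx q ρ μ * dd κ q ρ ϰ)
        from Finset.sum_congr rfl fun ϰ _ => Finset.mul_sum _ _ _,
        Finset.sum_comm]
      refine Finset.sum_congr rfl fun ρ _ => ?_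
      rw [Finset.mul_sum]
      exact Finset.sum_congr rfl fun ϰ _ => by ring
  rw [step4, keyA (κ := κ) q μ l]
  have step5 : ∀ ρ ∈ dwn μ, κ ρ μ * bx q ρ μ *
      (∑ ϰ ∈ dwn l, κ ϰ l * bx q ϰ l * dd κ q ρ ϰ)
      = κ ρ μ * bx q ρ μ * dd κ q ρ l
        - (if l = ρ then κ ρ μ * bx q ρ μ else 0) := by
    intro ρ hρ
    rw [keyA (κ := κ) q ρ l, mul_sub, mul_ite, mul_one, mul_zero]
  rw [Finset.sum_congr rfl step5, Finset.sum_sub_distrib]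
  have step6 : ∑ ρ ∈ dwn μ, (if l = ρ then κ ρ μ * bx q ρ μ else 0)
      = if CoversF l μ then κ l μ * bx q l μ else 0 := by
    rw [Finset.sum_ite_eq (dwn μ) l (fun ρ => κ ρ μ * bx q ρ μ)]
    by_cases hcm : CoversF l μ
    · rw [if_pos (mem_dwn.2 hcm), if_pos hcm]
    · rw [if_neg (fun h => hcm (mem_dwn.1 h)), if_neg hcm]
  rw [step6]
  -- final scalar algebra
  have hzero : ((n : ℝ) - μ.card) * ((n : ℝ) - 1 + μ.card + t) *
      (if l = μ then (1 : ℝ) else 0) = 0 := by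
    by_cases hlm : l = μ
    · have : (μ.card : ℝ) = (n : ℝ) := by rw [← hlm, hc]
      rw [if_pos hlm, this]
      ring
    · rw [if_neg hlm]
      ring
  rw [hc]
  nlinarith [hzero]



lemma sqrt_pow_ {ξ : ℝ} (hξ : 0 ≤ ξ) (n : ℕ) : Real.sqrt (ξ ^ n) = Real.sqrt ξ ^ n := by
  rw [show ξ ^ n = (Real.sqrt ξ ^ n) ^ 2 by
      rw [← pow_mul, mul_comm, pow_mul, Real.sq_sqrt hξ],
    Real.sqrt_sq (pow_nonneg (Real.sqrt_nonneg ξ) n)]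

lemma sqrtM (hκ : EdgePositive κ) {q : P → ℝ} {t ξ : ℝ} (hq : ∀ x, 0 < q x)
    (hξ0 : 0 < ξ) (hξ1 : ξ < 1) {l : Finset P} (hl : IsIdealF l) :
    Real.sqrt (Mxi κ q t ξ l)
      = Real.sqrt ((1 - ξ) ^ t) * (Real.sqrt ξ) ^ l.card
          * (dimT κ l / (Nat.factorial l.card : ℝ)) * ∏ x ∈ l, q x := by
  have h1 : (0:ℝ) ≤ (1 - ξ) ^ t := Real.rpow_nonneg (by linarith) t
  have h3 : (0:ℝ) ≤ dimT κ l / (Nat.factorial l.card : ℝ) :=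
    div_nonneg (dimT_pos' hκ hl).le (Nat.cast_nonneg _)
  have h4 : (0:ℝ) ≤ ∏ x ∈ l, q x := Finset.prod_nonneg fun x _ => (hq x).le
  rw [Mxi, show (∏ x ∈ l, q x ^ 2) = (∏ x ∈ l, q x) ^ 2 from (Finset.prod_pow l 2 q)]
  rw [Real.sqrt_mul (by positivity), Real.sqrt_mul (by positivity), Real.sqrt_mul h1]
  rw [sqrt_pow_ hξ0.le, Real.sqrt_sq h3, Real.sqrt_sq h4]

lemma dimI_prod (q : P → ℝ) (μ l : Finset P) :
    dimI κ μ l * ∏ x ∈ l, q x = (∏ x ∈ μ, q x) * dd κ q μ l := by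
  by_cases h : μ ⊆ l
  · rw [dd, ← Finset.prod_sdiff h]
    ring
  · have h0 : dimI κ μ l = 0 := by
      by_contra hne; exact h (dimI_ne_zero_subset hne)
    rw [dd, h0]
    ring

/-- main per-vertex formula : `√M(l) · P*_μ(l)` in terms of `dd`. -/
lemma sMP (hκ : EdgePositive κ) {q : P → ℝ} {t ξ : ℝ} (hq : ∀ x, 0 < q x)
    (hξ0 : 0 < ξ) (hξ1 : ξ < 1) {l : Finset P} (hl : IsIdealF l) (μ : Finset P) :
    Real.sqrt (Mxi κ q t ξ l) * Pstar κ μ l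
      = Real.sqrt ((1 - ξ) ^ t) * (Real.sqrt ξ) ^ l.card
          * ((l.card.descFactorial μ.card : ℝ) / (Nat.factorial l.card : ℝ))
          * ((∏ x ∈ μ, q x) * dd κ q μ l) := by
  rw [sqrtM hκ hq hξ0 hξ1 hl, Pstar, ← dimI_prod q μ l]
  have hT : dimT κ l ≠ 0 := (dimT_pos' hκ hl).ne'
  field_simp

end Aux

/-- action of the Kerov operators `U` and `D` on the functions `𝓘_ξ P*_μ`. -/
theorem statement8 {P : Type*} [PartialOrder P]
    (κ : Finset P → Finset P → ℝ) (q : P → ℝ) (t ξ : ℝ)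
    (hκ : EdgePositive κ) (hq : ∀ x : P, 0 < q x) (ht : 0 < t)
    (hξ0 : 0 < ξ) (hξ1 : ξ < 1)
    (hLF : LevelsFinite P) (hUD : UDSelfDual κ)
    (hK : KerovCond κ (fun x => ((q x : ℂ)) ^ 2) (t : ℂ)) :
    ∀ μ l : Finset P, IsIdealF μ → IsIdealF l →
      ((∑' ϰ : {ϰ : Finset P // CoversF ϰ l},
          κ ϰ.1 l * bx q ϰ.1 l * Real.sqrt (Mxi κ q t ξ ϰ.1) * Pstar κ μ ϰ.1)
        = (Real.sqrt ξ)⁻¹ * ((l.card : ℝ) - (μ.card : ℝ)) *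
            (Real.sqrt (Mxi κ q t ξ l) * Pstar κ μ l)) ∧
      ((∑' ν : {ν : Finset P // CoversF l ν},
          κ l ν.1 * bx q l ν.1 * Real.sqrt (Mxi κ q t ξ ν.1) * Pstar κ μ ν.1)
        = Real.sqrt ξ * ((l.card : ℝ) + (μ.card : ℝ) + t) *
            (Real.sqrt (Mxi κ q t ξ l) * Pstar κ μ l)
          + Real.sqrt ξ *
              ∑' ρ : {ρ : Finset P // CoversF ρ μ},
                κ ρ.1 μ * (bx q ρ.1 μ) ^ 2 *
                  (Real.sqrt (Mxi κ q t ξ l) * Pstar κ ρ.1 l)) := by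

  intro μ l hμ hl
  have hsξ : (0:ℝ) < Real.sqrt ξ := Real.sqrt_pos.2 hξ0
  constructor
  · -- part (i)
    rw [tsum_subtype_eq (fun ϰ => CoversF ϰ l) (dwn l) (fun ϰ => mem_dwn)
        (fun ϰ => κ ϰ l * bx q ϰ l * Real.sqrt (Mxi κ q t ξ ϰ) * Pstar κ μ ϰ)]
    rcases Nat.eq_zero_or_pos l.card with hn0 | hpos
    · have hle : l = ∅ := Finset.card_eq_zero.1 hn0
      subst hle
      rw [dwn_empty, Finset.sum_empty]
      by_cases hμ0 : μ = ∅
      · subst hμ0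
        rw [Finset.card_empty]
        ring
      · have hP : Pstar κ μ (∅ : Finset P) = 0 := by
          rw [Pstar]
          have h0 : dimI κ μ ∅ = 0 := by
            by_contra hne
            exact hμ0 (Finset.subset_empty.1 (dimI_ne_zero_subset hne))
          rw [h0]; ring
        rw [hP]; ring
    · obtain ⟨n', hn⟩ : ∃ n', l.card = n' + 1 := ⟨l.card - 1, by omega⟩
      have hterm : ∀ ϰ ∈ dwn l, κ ϰ l * bx q ϰ l * Real.sqrt (Mxi κ q t ξ ϰ) * Pstar κ μ ϰ
          = (Real.sqrt ((1 - ξ) ^ t) * (Real.sqrt ξ) ^ n'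
              * ((n'.descFactorial μ.card : ℝ) / (Nat.factorial n' : ℝ))
              * ∏ x ∈ μ, q x) * (κ ϰ l * bx q ϰ l * dd κ q μ ϰ) := by
        intro ϰ hϰ
        have hcov := mem_dwn.1 hϰ
        have hcard : ϰ.card = n' := by
          have := hcov.2.2.2; omega
        rw [mul_assoc (κ ϰ l * bx q ϰ l), sMP hκ hq hξ0 hξ1 hcov.1 μ, hcard]
        ring
      rw [Finset.sum_congr rfl hterm, ← Finset.mul_sum, keyA (κ := κ) q μ l,
        sMP hκ hq hξ0 hξ1 hl μ, hn]
      by_cases hlμ : l = μ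
      · have hm : (μ.card : ℝ) = ((n' + 1 : ℕ) : ℝ) := by rw [← hlμ, hn]
        rw [if_pos hlμ, hlμ, dd_self, hm]
        ring
      · rw [if_neg hlμ, sub_zero]
        by_cases hdd : dd κ q μ l = 0
        · rw [hdd]; ring
        · have hsub : μ ⊆ l := by
            by_contra hns
            exact hdd (dd_eq_zero hns)
          have hmle : μ.card ≤ n' := by
            have hlt : μ.card < l.card :=
              Finset.card_lt_card (lt_of_le_of_ne hsub (fun h => hlμ h.symm))
            omega
          have hdescR : (((n' : ℝ) + 1) - (μ.card : ℝ)) * (((n' + 1).descFactorial μ.card : ℝ))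
              = ((n' : ℝ) + 1) * ((n'.descFactorial μ.card : ℝ)) := by
            have hh := congrArg (Nat.cast (R := ℝ)) (Nat.succ_descFactorial n' μ.card)
            push_cast [Nat.cast_sub (show μ.card ≤ n' + 1 by omega)] at hh
            linear_combination hh
          rw [Nat.factorial_succ n', pow_succ]
          push_cast
          have hfac : ((Nat.factorial n' : ℝ)) ≠ 0 := Nat.cast_ne_zero.2 (Nat.factorial_ne_zero n')
          have hn1 : ((n' : ℝ) + 1) ≠ 0 := by positivity
          field_simp
          linear_combination (-(Real.sqrt ((1 - ξ) ^ t) * (∏ x ∈ μ, q x))) * hdescR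
  · -- part (ii)
    rw [tsum_subtype_eq (fun ν => CoversF l ν) (up hLF l) (fun ν => mem_up)
        (fun ν => κ l ν * bx q l ν * Real.sqrt (Mxi κ q t ξ ν) * Pstar κ μ ν),
      tsum_subtype_eq (fun ρ => CoversF ρ μ) (dwn μ) (fun ρ => mem_dwn)
        (fun ρ => κ ρ μ * (bx q ρ μ) ^ 2 * (Real.sqrt (Mxi κ q t ξ l) * Pstar κ ρ l))]
    have hterm2 : ∀ ν ∈ up hLF l, κ l ν * bx q l ν * Real.sqrt (Mxi κ q t ξ ν) * Pstar κ μ ν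
        = (Real.sqrt ((1 - ξ) ^ t) * (Real.sqrt ξ) ^ (l.card + 1)
            * (((l.card + 1).descFactorial μ.card : ℝ) / (Nat.factorial (l.card + 1) : ℝ))
            * ∏ x ∈ μ, q x) * (κ l ν * bx q l ν * dd κ q μ ν) := by
      intro ν hν
      have hcov := mem_up.1 hν
      have hcard : ν.card = l.card + 1 := hcov.2.2.2
      rw [mul_assoc (κ l ν * bx q l ν), sMP hκ hq hξ0 hξ1 hcov.2.1 μ, hcard]
      ring
    rw [Finset.sum_congr rfl hterm2, ← Finset.mul_sum,
      keyB hLF hUD hK l.card l μ hl rfl, sMP hκ hq hξ0 hξ1 hl μ, mul_add]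
    congr 1
    · -- diagonal term
      by_cases hdd : dd κ q μ l = 0
      · rw [hdd]; ring
      · have hsub : μ ⊆ l := by
          by_contra hns
          exact hdd (dd_eq_zero hns)
        have hmle : μ.card ≤ l.card := Finset.card_le_card hsub
        have hdescR : (((l.card : ℝ) + 1) - (μ.card : ℝ))
              * (((l.card + 1).descFactorial μ.card : ℝ))
            = ((l.card : ℝ) + 1) * ((l.card.descFactorial μ.card : ℝ)) := by
          have hh := congrArg (Nat.cast (R := ℝ)) (Nat.succ_descFactorial l.card μ.card)
          push_cast [Nat.cast_sub (show μ.card ≤ l.card + 1 by omega)] at hh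
          linear_combination hh
        rw [Nat.factorial_succ l.card, pow_succ]
        push_cast
        have hfac : ((Nat.factorial l.card : ℝ)) ≠ 0 :=
          Nat.cast_ne_zero.2 (Nat.factorial_ne_zero l.card)
        have hn1 : ((l.card : ℝ) + 1) ≠ 0 := by positivity
        field_simp
        linear_combination (Real.sqrt ((1 - ξ) ^ t) * (∏ x ∈ μ, q x)) * hdescR
    · -- second sum
      rw [Finset.mul_sum, Finset.mul_sum]
      refine Finset.sum_congr rfl fun ρ hρ => ?_
      have hcov := mem_dwn.1 hρ
      have hm : μ.card = ρ.card + 1 := hcov.2.2.2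
      rcases covers_sdiff hcov with ⟨a, ha, haρ, hins⟩
      have hbx : bx q ρ μ = q a := bx_covers q ha
      have hprod : ∏ x ∈ μ, q x = q a * ∏ x ∈ ρ, q x := by
        rw [hins, Finset.prod_insert haρ]
      rw [sMP hκ hq hξ0 hξ1 hl ρ, hm, Nat.succ_descFactorial_succ l.card ρ.card,
        Nat.factorial_succ l.card, pow_succ, hbx, hprod]
      push_cast
      have hfac : ((Nat.factorial l.card : ℝ)) ≠ 0 :=
        Nat.cast_ne_zero.2 (Nat.factorial_ne_zero l.card)
      have hn1 : ((l.card : ℝ) + 1) ≠ 0 := by positivity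
      field_simp


end IdealGraph
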